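/- Let $e_1,e_2,f$ be three pairwise non-parallel plane vectors and $\mathfrak{l}$ a gauge direction not parallel to any of them. Define $W_b(e_1,e_2,f)=\mathrm{wind}(f,e_2)-\mathrm{wind}(f,-e_1)-\mathrm{wind}(e_1,e_2)-\epsilon_2(e_1)$. Then $W_b(e_1,e_2,f) = \big(s(f,e_2)[\epsilon_2(e_2)-\epsilon_2(f)]^2 + s(f,e_1)[1-\epsilon_2(e_1)-\epsilon_2(f)]^2 + s(e_2,e_1)[\epsilon_2(e_2)-\epsilon_2(e_1)]^2 - 1\big)/2$; in particular $W_b(e_1,e_2,f)$ is independent of the choice of gauge direction $\mathfrak{l}$. -/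
import Mathlib


open scoped Classical

/-- The determinant of the `2×2` matrix with columns `x, y`; nonzero iff `x,y` not parallel. -/
noncomputable def det2 (x y : ℝ × ℝ) : ℝ := x.1 * y.2 - x.2 * y.1

/-- The orientation sign `s(x,y) ∈ {±1}` of an ordered pair of (non-parallel) plane vectors. -/
noncomputable def sgn (x y : ℝ × ℝ) : ℝ := Real.sign (det2 x y)

/-- The index `ε₂(x) = (1 - s(x,𝔩))/2` of a vector `x` with respect to the gauge direction `l`. -/
noncomputable def eps2 (l x : ℝ × ℝ) : ℝ := (1 - sgn x l) / 2

/-- The local winding number of the ordered pair `(a,b)` with respect to the gauge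
direction `l`. -/
noncomputable def wind (l a b : ℝ × ℝ) : ℝ :=
  if sgn a b = 1 ∧ sgn a l = 1 ∧ sgn l b = 1 then 1
  else if sgn a b = -1 ∧ sgn a l = -1 ∧ sgn l b = -1 then -1
  else 0

/-- The index `W_b(e₁,e₂,f) = wind(f,e₂) - wind(f,-e₁) - wind(e₁,e₂) - ε₂(e₁)` (with respect
to the gauge direction `l`). -/
noncomputable def Wb (l e1 e2 f : ℝ × ℝ) : ℝ :=
  wind l f e2 - wind l f (-e1) - wind l e1 e2 - eps2 l e1

lemma sgn_swap (x y : ℝ × ℝ) : sgn x y = - sgn y x := by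
  have h : det2 x y = -det2 y x := by simp only [det2]; ring
  rw [sgn, sgn, h, Real.sign_neg]

lemma sgn_neg_right (x y : ℝ × ℝ) : sgn x (-y) = - sgn x y := by
  have h : det2 x (-y) = -det2 x y := by simp only [det2, Prod.fst_neg, Prod.snd_neg]; ring
  rw [sgn, sgn, h, Real.sign_neg]

/-- The formula for `Wb` in terms of signs and epsilons; holds for any sign pattern. -/
lemma Wb_formula' (e1 e2 f l : ℝ × ℝ)
    (h12 : det2 e1 e2 ≠ 0) (h1f : det2 e1 f ≠ 0) (h2f : det2 e2 f ≠ 0)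
    (h1l : det2 e1 l ≠ 0) (h2l : det2 e2 l ≠ 0) (hfl : det2 f l ≠ 0) :
    Wb l e1 e2 f =
      (sgn f e2 * (eps2 l e2 - eps2 l f) ^ 2 +
       sgn f e1 * (1 - eps2 l e1 - eps2 l f) ^ 2 +
       sgn e2 e1 * (eps2 l e2 - eps2 l e1) ^ 2 - 1) / 2 := by
  have R1 : sgn f e2 = - sgn e2 f := sgn_swap f e2
  have R2 : sgn l e2 = - sgn e2 l := sgn_swap l e2
  have R3 : sgn f (-e1) = sgn e1 f := by rw [sgn_neg_right, sgn_swap e1 f]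
  have R4 : sgn l (-e1) = sgn e1 l := by rw [sgn_neg_right, sgn_swap e1 l]
  have R5 : sgn f e1 = - sgn e1 f := sgn_swap f e1
  have R6 : sgn e2 e1 = - sgn e1 e2 := sgn_swap e2 e1
  have d12 : sgn e1 e2 = -1 ∨ sgn e1 e2 = 1 := Real.sign_apply_eq_of_ne_zero _ h12
  have d1f : sgn e1 f = -1 ∨ sgn e1 f = 1 := Real.sign_apply_eq_of_ne_zero _ h1f
  have d2f : sgn e2 f = -1 ∨ sgn e2 f = 1 := Real.sign_apply_eq_of_ne_zero _ h2f
  have d1l : sgn e1 l = -1 ∨ sgn e1 l = 1 := Real.sign_apply_eq_of_ne_zero _ h1l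
  have d2l : sgn e2 l = -1 ∨ sgn e2 l = 1 := Real.sign_apply_eq_of_ne_zero _ h2l
  have dfl : sgn f l = -1 ∨ sgn f l = 1 := Real.sign_apply_eq_of_ne_zero _ hfl
  simp only [Wb, wind, eps2, R1, R2, R3, R4, R5, R6]
  rcases d12 with h12' | h12' <;> rcases d1f with h1f' | h1f' <;>
    rcases d2f with h2f' | h2f' <;> rcases d1l with h1l' | h1l' <;>
    rcases d2l with h2l' | h2l' <;> rcases dfl with hfl' | hfl' <;>
    simp only [h12', h1f', h2f', h1l', h2l', hfl'] <;> norm_num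

set_option maxHeartbeats 2000000 in
/-- `Wb` depends only on the three mutual orientation signs of `e₁, e₂, f`; in particular it is
independent of the gauge direction. Uses the Plücker relation among the six determinants. -/
lemma Wb_eq_W0 (e1 e2 f l : ℝ × ℝ)
    (h12 : det2 e1 e2 ≠ 0) (h1f : det2 e1 f ≠ 0) (h2f : det2 e2 f ≠ 0)
    (h1l : det2 e1 l ≠ 0) (h2l : det2 e2 l ≠ 0) (hfl : det2 f l ≠ 0) :
    Wb l e1 e2 f =
      (sgn f e2 + sgn f e1 + sgn e2 e1 - sgn f e2 * sgn f e1 * sgn e2 e1 - 2) / 4 := by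
  have R1 : sgn f e2 = - sgn e2 f := sgn_swap f e2
  have R2 : sgn l e2 = - sgn e2 l := sgn_swap l e2
  have R3 : sgn f (-e1) = sgn e1 f := by rw [sgn_neg_right, sgn_swap e1 f]
  have R4 : sgn l (-e1) = sgn e1 l := by rw [sgn_neg_right, sgn_swap e1 l]
  have R5 : sgn f e1 = - sgn e1 f := sgn_swap f e1
  have R6 : sgn e2 e1 = - sgn e1 e2 := sgn_swap e2 e1
  have d12 : sgn e1 e2 = -1 ∨ sgn e1 e2 = 1 := Real.sign_apply_eq_of_ne_zero _ h12
  have d1f : sgn e1 f = -1 ∨ sgn e1 f = 1 := Real.sign_apply_eq_of_ne_zero _ h1f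
  have d2f : sgn e2 f = -1 ∨ sgn e2 f = 1 := Real.sign_apply_eq_of_ne_zero _ h2f
  have d1l : sgn e1 l = -1 ∨ sgn e1 l = 1 := Real.sign_apply_eq_of_ne_zero _ h1l
  have d2l : sgn e2 l = -1 ∨ sgn e2 l = 1 := Real.sign_apply_eq_of_ne_zero _ h2l
  have dfl : sgn f l = -1 ∨ sgn f l = 1 := Real.sign_apply_eq_of_ne_zero _ hfl
  have m1 : 0 < sgn e1 e2 * det2 e1 e2 := Real.sign_mul_pos_of_ne_zero _ h12
  have m2 : 0 < sgn e1 f * det2 e1 f := Real.sign_mul_pos_of_ne_zero _ h1f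
  have m3 : 0 < sgn e2 f * det2 e2 f := Real.sign_mul_pos_of_ne_zero _ h2f
  have m4 : 0 < sgn e1 l * det2 e1 l := Real.sign_mul_pos_of_ne_zero _ h1l
  have m5 : 0 < sgn e2 l * det2 e2 l := Real.sign_mul_pos_of_ne_zero _ h2l
  have m6 : 0 < sgn f l * det2 f l := Real.sign_mul_pos_of_ne_zero _ hfl
  have hsum : det2 e1 e2 * det2 f l - det2 e1 f * det2 e2 l + det2 e1 l * det2 e2 f = 0 := by
    simp only [det2]; ring
  simp only [Wb, wind, eps2, R1, R2, R3, R4, R5, R6]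
  rcases d12 with h12' | h12' <;> rcases d1f with h1f' | h1f' <;>
    rcases d2f with h2f' | h2f' <;> rcases d1l with h1l' | h1l' <;>
    rcases d2l with h2l' | h2l' <;> rcases dfl with hfl' | hfl' <;>
    simp only [h12', h1f', h2f', h1l', h2l', hfl'] <;>
    first
      | (norm_num; done)
      | (exfalso;
         rw [h12'] at m1; rw [h1f'] at m2; rw [h2f'] at m3;
         rw [h1l'] at m4; rw [h2l'] at m5; rw [hfl'] at m6;
         norm_num at m1 m2 m3 m4 m5 m6;
         nlinarith [hsum, m1, m2, m3, m4, m5, m6])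

/-- (Lemma `lem:indip`, eq. (wind_bw_rel).)  For pairwise non-parallel plane
vectors `e₁, e₂, f` and a gauge direction `𝔩` not parallel to any of them,
`W_b(e₁,e₂,f) = (s(f,e₂)[ε₂(e₂)-ε₂(f)]² + s(f,e₁)[1-ε₂(e₁)-ε₂(f)]² +
 s(e₂,e₁)[ε₂(e₂)-ε₂(e₁)]² - 1)/2`, and in particular `W_b(e₁,e₂,f)` is independent of the
choice of the admissible gauge direction. -/
theorem Wb_formula_and_gauge_independence (e1 e2 f l : ℝ × ℝ)
    (h12 : det2 e1 e2 ≠ 0) (h1f : det2 e1 f ≠ 0) (h2f : det2 e2 f ≠ 0)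
    (h1l : det2 e1 l ≠ 0) (h2l : det2 e2 l ≠ 0) (hfl : det2 f l ≠ 0) :
    Wb l e1 e2 f =
      (sgn f e2 * (eps2 l e2 - eps2 l f) ^ 2 +
       sgn f e1 * (1 - eps2 l e1 - eps2 l f) ^ 2 +
       sgn e2 e1 * (eps2 l e2 - eps2 l e1) ^ 2 - 1) / 2 ∧
    ∀ l' : ℝ × ℝ, det2 e1 l' ≠ 0 → det2 e2 l' ≠ 0 → det2 f l' ≠ 0 →
      Wb l' e1 e2 f = Wb l e1 e2 f := by
  refine ⟨Wb_formula' e1 e2 f l h12 h1f h2f h1l h2l hfl, fun l' h1l' h2l' hfl' => ?_⟩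
  rw [Wb_eq_W0 e1 e2 f l' h12 h1f h2f h1l' h2l' hfl',
      Wb_eq_W0 e1 e2 f l h12 h1f h2f h1l h2l hfl]
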